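/- Let λ, μ, c > 0 with μ/λ > c, and let x : [0,∞) → ℝ be differentiable with x'(t) = λ x(t)² − (λc + μ) x(t) + μc for all t ≥ 0. If x(0) ∈ [0, c], then x(t) → c as t → ∞. -/

import Mathlib

open Set Filter

/-- Case 2 of Theorem 3.1: when `μ/λ > c`, every solution of
`x' = λ x² − (λc + μ) x + μc` starting in `[0, c]` converges to `c`. -/
theorem stmt_5 (lam mu c : ℝ) (hlam : 0 < lam) (hmu : 0 < mu) (hc : 0 < c)
    (hcase : c < mu / lam)
    (x : ℝ → ℝ)
    (hx : ∀ t ≥ (0 : ℝ),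
      HasDerivAt x (lam * x t ^ 2 - (lam * c + mu) * x t + mu * c) t)
    (hx0 : x 0 ∈ Icc (0 : ℝ) c) :
    Tendsto x atTop (nhds c) := by
  have hdelta : 0 < mu - lam * c := by
    have := (lt_div_iff₀ hlam).mp hcase
    linarith [this]
  set a : ℝ → ℝ := fun t => lam * x t - mu with ha
  -- continuity of a on [0,∞)
  have hxc : ∀ t ≥ (0:ℝ), ContinuousAt x t := fun t ht => (hx t ht).continuousAt
  have hac : ContinuousOn a (Ici 0) := by
    intro t ht
    have h : ContinuousAt a t := ((hxc t ht).const_mul lam).sub continuousAt_const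
    exact h.continuousWithinAt
  have hAint : ∀ T ≥ (0:ℝ), IntervalIntegrable a MeasureTheory.volume 0 T := by
    intro T hT
    apply ContinuousOn.intervalIntegrable
    rw [uIcc_of_le hT]
    exact hac.mono (Icc_subset_Ici_self)
  set A : ℝ → ℝ := fun t => ∫ s in (0:ℝ)..t, a s with hA
  have hAderiv : ∀ t ≥ (0:ℝ), HasDerivWithinAt A (a t) (Ici t) t := by
    intro t ht
    exact intervalIntegral.integral_hasDerivWithinAt_right (hAint t ht)
      ⟨Ici 0, mem_of_superset self_mem_nhdsWithin (fun s hs => le_trans ht (le_of_lt hs)),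
        hac.aestronglyMeasurable measurableSet_Ici⟩
      ((hac t ht).mono (fun s hs => le_trans ht (le_of_lt hs)))
  set g : ℝ → ℝ := fun t => (c - x t) * Real.exp (-A t) with hg
  -- g has zero right derivative on [0,∞)
  have hgderiv : ∀ t ≥ (0:ℝ), HasDerivWithinAt g 0 (Ici t) t := by
    intro t ht
    have h1 : HasDerivWithinAt (fun s => c - x s)
        (-(lam * x t ^ 2 - (lam * c + mu) * x t + mu * c)) (Ici t) t :=
      ((hx t ht).const_sub c).hasDerivWithinAt
    have h2 : HasDerivWithinAt (fun s => Real.exp (-A s))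
        (Real.exp (-A t) * (-(a t))) (Ici t) t := ((hAderiv t ht).neg).exp
    have : HasDerivWithinAt g _ (Ici t) t := h1.mul h2
    convert this using 1
    simp only [ha]
    ring
  -- g continuous on [0, T]
  have hgcont : ∀ T ≥ (0:ℝ), ContinuousOn g (Icc 0 T) := by
    intro T hT
    have hAcont : ContinuousOn A (Icc 0 T) := by
      have := intervalIntegral.continuousOn_primitive_interval
        (μ := MeasureTheory.volume) (a := (0:ℝ)) (b := T) (f := a) ?_
      · rwa [uIcc_of_le hT] at this
      · rw [uIcc_of_le hT]
        exact (hac.mono Icc_subset_Ici_self).integrableOn_compact isCompact_Icc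
    have hxcont : ContinuousOn x (Icc 0 T) := fun t ht => (hxc t ht.1).continuousWithinAt
    exact (continuousOn_const.sub hxcont).mul (hAcont.neg.rexp)
  -- g constant, hence the explicit formula
  have hA0 : A 0 = 0 := by simp [hA]
  have key : ∀ t ≥ (0:ℝ), c - x t = (c - x 0) * Real.exp (A t) := by
    intro t ht
    have := constant_of_has_deriv_right_zero (hgcont t ht)
      (fun s hs => hgderiv s hs.1) t (right_mem_Icc.mpr ht)
    simp only [hg, hA0, neg_zero, Real.exp_zero, mul_one] at this
    have hne : Real.exp (-A t) ≠ 0 := (Real.exp_pos _).ne'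
    field_simp [Real.exp_neg] at this ⊢
    rw [← this, mul_assoc, ← Real.exp_add]
    simp
  have hxle : ∀ t ≥ (0:ℝ), x t ≤ c := by
    intro t ht
    have h := key t ht
    nlinarith [Real.exp_pos (A t), hx0.2]
  -- A t ≤ -(mu - lam c) t
  have hAle : ∀ t ≥ (0:ℝ), A t ≤ -(mu - lam * c) * t := by
    intro t ht
    have hmono : ∫ s in (0:ℝ)..t, a s ≤ ∫ s in (0:ℝ)..t, -(mu - lam * c) := by
      apply intervalIntegral.integral_mono_on ht (hAint t ht) intervalIntegrable_const
      intro s hs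
      have := hxle s hs.1
      simp only [ha]
      nlinarith
    calc A t ≤ ∫ s in (0:ℝ)..t, -(mu - lam * c) := hmono
    _ = -(mu - lam * c) * t := by simp; ring
  -- squeeze
  have h0 : Tendsto (fun t => c - x t) atTop (nhds 0) := by
    have hf : ∀ᶠ t in atTop, 0 ≤ c - x t := by
      filter_upwards [eventually_ge_atTop (0:ℝ)] with t ht
      have h := key t ht
      nlinarith [Real.exp_pos (A t), hx0.2]
    have hft : ∀ᶠ t in atTop,
        c - x t ≤ (c - x 0) * Real.exp (-(mu - lam * c) * t) := by
      filter_upwards [eventually_ge_atTop (0:ℝ)] with t ht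
      rw [key t ht]
      have := Real.exp_le_exp.mpr (hAle t ht)
      nlinarith [Real.exp_pos (A t), hx0.2]
    have htend : Tendsto (fun t => (c - x 0) * Real.exp (-(mu - lam * c) * t))
        atTop (nhds 0) := by
      have h0 : Tendsto (fun t : ℝ => (mu - lam * c) * t) atTop atTop :=
        Tendsto.const_mul_atTop hdelta tendsto_id
      have h1 : Tendsto (fun t : ℝ => -(mu - lam * c) * t) atTop atBot := by
        have h := tendsto_neg_atTop_atBot.comp h0
        have heq : (fun t : ℝ => -(mu - lam * c) * t)
            = fun t : ℝ => -((mu - lam * c) * t) := by funext t; ring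
        rw [heq]
        exact h
      have h2 := Real.tendsto_exp_atBot.comp h1
      have h3 := h2.const_mul (c - x 0)
      simpa [Function.comp] using h3
    exact squeeze_zero' hf hft htend
  have h1 : Tendsto (fun t => c - (c - x t)) atTop (nhds (c - 0)) :=
    tendsto_const_nhds.sub h0
  simpa using h1
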